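/- Let Δ ≥ 4 be an integer and define F(i,j) = (4Δ−6)(1/i + 1/j) + Δ² − 6Δ + 3 + 6/Δ − (i−j)². Then for all integers 3 ≤ i ≤ j ≤ Δ one has F(i,j) ≥ 2 − 6/Δ > 0. -/
import Mathlib


/-- The dual slack function. -/
noncomputable def F (Δ i j : ℕ) : ℝ :=
  (4 * (Δ : ℝ) - 6) * (1 / (i : ℝ) + 1 / (j : ℝ))
    + (Δ : ℝ) ^ 2 - 6 * (Δ : ℝ) + 3 + 6 / (Δ : ℝ) - ((i : ℝ) - (j : ℝ)) ^ 2

/-- For `3 ≤ i ≤ j ≤ Δ` one has `F(i,j) ≥ 2 − 6/Δ > 0`. -/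
theorem F_ge_of_three_le (Δ : ℕ) (hΔ : 4 ≤ Δ) (i j : ℕ)
    (hi : 3 ≤ i) (hij : i ≤ j) (hj : j ≤ Δ) :
    2 - 6 / (Δ : ℝ) ≤ F Δ i j ∧ 0 < 2 - 6 / (Δ : ℝ) := by
  have hD : (4:ℝ) ≤ (Δ:ℝ) := by exact_mod_cast hΔ
  have hi' : (3:ℝ) ≤ (i:ℝ) := by exact_mod_cast hi
  have hij' : (i:ℝ) ≤ (j:ℝ) := by exact_mod_cast hij
  have hj' : (j:ℝ) ≤ (Δ:ℝ) := by exact_mod_cast hj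
  have hxpos : (0:ℝ) < i := by linarith
  have hypos : (0:ℝ) < j := by linarith
  have hDpos : (0:ℝ) < Δ := by linarith
  constructor
  · have h1 : 1/(Δ:ℝ) ≤ 1/(i:ℝ) := one_div_le_one_div_of_le hxpos (by linarith)
    have h2 : 1/(Δ:ℝ) ≤ 1/(j:ℝ) := one_div_le_one_div_of_le hypos hj'
    have h3 : ((i:ℝ)-(j:ℝ))^2 ≤ ((Δ:ℝ)-3)^2 := by nlinarith
    have h6 : (0:ℝ) ≤ 4*(Δ:ℝ)-6 := by linarith
    have h4 : (4*(Δ:ℝ)-6)*(2/(Δ:ℝ)) ≤ (4*(Δ:ℝ)-6)*(1/(i:ℝ)+1/(j:ℝ)) := by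
      apply mul_le_mul_of_nonneg_left _ h6
      have : 2/(Δ:ℝ) = 1/Δ + 1/Δ := by ring
      linarith
    have h5 : (4*(Δ:ℝ)-6)*(2/(Δ:ℝ)) = 8 - 12/(Δ:ℝ) := by
      field_simp; ring
    rw [h5] at h4
    have hsq : ((Δ:ℝ)-3)^2 = (Δ:ℝ)^2 - 6*Δ + 9 := by ring
    have h8 : 12/(Δ:ℝ) = 2*(6/(Δ:ℝ)) := by ring
    unfold F
    linarith
  · have : 6/(Δ:ℝ) ≤ 6/4 := by
      apply div_le_div_of_nonneg_left (by norm_num) (by norm_num) hD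
    linarith
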